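/- The explicit-flattening signature is a signature: H^Flat(T) := T·T (self-composition) together with θ^Flat_{X,(Z,e)} := X·e·X·Z : X·X·Z → X·Z·X·Z (inserting the point e of (Z,e) between the two copies of X) satisfies the unit and composition coherence laws of a signature. -/

import Mathlib

open CategoryTheory Limits

universe v u

/-- A pointed endofunctor on `C`. -/
structure Ptd (C : Type u) [Category.{v} C] where
  Z : C ⥤ C
  e : 𝟭 C ⟶ Z

variable {C : Type u} [Category.{v} C]

/-- The property of `(H, θ)` being a *signature*: `θ : (H −)·U∼ ⟶ H (−·U∼)` is
natural in both variables and satisfies the unit and composition coherence laws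
(here `X·Z` is the composite `Z ⋙ X`). -/
structure IsSignature (H : (C ⥤ C) ⥤ (C ⥤ C))
    (θ : ∀ (X : C ⥤ C) (Z : Ptd C), (Z.Z ⋙ H.obj X) ⟶ H.obj (Z.Z ⋙ X)) : Prop where
  nat_X : ∀ {X X' : C ⥤ C} (α : X ⟶ X') (Z : Ptd C),
      Functor.whiskerLeft Z.Z (H.map α) ≫ θ X' Z = θ X Z ≫ H.map (Functor.whiskerLeft Z.Z α)
  nat_Z : ∀ (X : C ⥤ C) {Z Z' : Ptd C} (g : Z.Z ⟶ Z'.Z), Z.e ≫ g = Z'.e →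
      Functor.whiskerRight g (H.obj X) ≫ θ X Z' = θ X Z ≫ H.map (Functor.whiskerRight g X)
  unit : ∀ X : C ⥤ C,
      θ X ⟨𝟭 C, 𝟙 (𝟭 C)⟩ =
        (Functor.leftUnitor (H.obj X)).hom ≫ H.map (Functor.leftUnitor X).inv
  comp : ∀ (X : C ⥤ C) (Z Z' : Ptd C),
      θ X ⟨Z.Z ⋙ Z'.Z, Z.e ≫ Functor.whiskerLeft Z.Z Z'.e⟩ =
        (Functor.associator Z.Z Z'.Z (H.obj X)).hom ≫
          Functor.whiskerLeft Z.Z (θ X Z') ≫ θ (Z'.Z ⋙ X) Z ≫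
          H.map (Functor.associator Z.Z Z'.Z X).inv


/-- The explicit-flattening signature functor `H^Flat (T) := T·T` (self-composition),
acting on morphisms by horizontal composition. -/
def Hflat : (C ⥤ C) ⥤ (C ⥤ C) where
  obj X := X ⋙ X
  map f := NatTrans.hcomp f f
  map_id := by intros; ext; simp [NatTrans.hcomp]
  map_comp := by intros; ext; simp [NatTrans.hcomp]

/-- The strength `θ^Flat_{X,(Z,e)} := X·e·X·Z : X·X·Z ⟶ X·Z·X·Z`, inserting the
point `e` of `(Z,e)` between the two copies of `X`. -/
def θflat (X : C ⥤ C) (Z : Ptd C) :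
    (Z.Z ⋙ (Hflat (C := C)).obj X) ⟶ (Hflat (C := C)).obj (Z.Z ⋙ X) :=
  Functor.whiskerLeft (Z.Z ⋙ X) (Functor.whiskerRight Z.e X)

/-- **The explicit-flattening signature is a signature**: `(H^Flat, θ^Flat)`
satisfies the unit and composition coherence laws (and the naturality conditions)
of a signature. -/
theorem flat_isSignature : IsSignature (Hflat (C := C)) (θflat (C := C)) := by
  constructor
  · intro X X' α Z
    ext c
    simp [Hflat, θflat, NatTrans.hcomp, ← Functor.map_comp, α.naturality]
    have h := Z.e.naturality (α.app (Z.Z.obj c)); simp only [Functor.id_map] at h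
    rw [h]
  · intro X Z Z' g hg
    ext c
    have := congrArg (fun (t : 𝟭 C ⟶ Z'.Z) => t.app (X.obj (Z.Z.obj c))) hg
    simp only [NatTrans.comp_app, Functor.id_obj] at this
    simp [Hflat, θflat, ← Functor.map_comp, ← this, ← X.map_comp,
      NatTrans.naturality]
    rw [reassoc_of% this]
    have h := Z'.e.naturality (X.map (g.app c)); simp only [Functor.id_map] at h
    rw [h]
  · intro X
    ext c
    simp [Hflat, θflat]
  · intro X Z Z'
    ext c
    simp [Hflat, θflat, ← Functor.map_comp]
    have h := Z'.e.naturality (Z.e.app (X.obj (Z'.Z.obj (Z.Z.obj c)))); simp only [Functor.id_map, Functor.id_obj] at h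
    rw [h]
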